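/- For all m and n, every element (φ,χ) of Π^m(𝛗,n) satisfies d(φ,χ) ≤ lh(𝛗)·2^n; consequently |Π^m(𝛗,n)| ≤ 2^{lh(𝛗)·2^n}, and hence there exists k with Π^k(𝛗,n) = Π^{k+1}(𝛗,n). -/
import Mathlib


/-- First-order terms with variables from `V`, built from constants
(function symbols) and application. -/
inductive Tm (V : Type) : Type
  | var : V → Tm V
  | const : ℕ → Tm V
  | app : Tm V → Tm V → Tm V
  deriving DecidableEq

namespace Tm

/-- Substitute terms for variables. -/
def bind {V W : Type} (f : V → Tm W) : Tm V → Tm W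
  | var v => f v
  | const c => const c
  | app s t => app (bind f s) (bind f t)

def vars {V : Type} : Tm V → List V
  | var v => [v]
  | const _ => []
  | app s t => vars s ++ vars t

/-- A term is a `w`-term (relative to the list `b` of bound variables) if all
its variables are free (not in `b`); after the starring operation all these
become the distinguished variable `w = 0`. -/
def wOnly (b : List ℕ) (t : Tm ℕ) : Bool :=
  t.vars.all fun v => decide (v ∉ b)

/-- Replace each maximal term whose only variable (after replacing free
variables by `w`) is `w` by the variable `w = 0`. -/
def collapse (b : List ℕ) : Tm ℕ → Tm ℕ
  | var v => if v ∈ b then var v else var 0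
  | const c => if wOnly b (const c) then var 0 else const c
  | app s t => if wOnly b (app s t) then var 0 else app (collapse b s) (collapse b t)

/-- Substitution of the term `u` for the variable `x`. -/
def substV (x : ℕ) (u : Tm ℕ) : Tm ℕ → Tm ℕ
  | var v => if v = x then u else var v
  | const c => const c
  | app s t => app (substV x u s) (substV x u t)

/-- The numeral for `a`. -/
def num : ℕ → Tm ℕ
  | 0 => const 0
  | n + 1 => app (const 1) (num n)

end Tm

/-- Formulas of the language L⁺: the propositional constant ε, the fresh
predicates `P_j`, the relations of L, equality, disjunction, negation and
universal quantification (over variable indices). -/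
inductive Fml (T : Type) : Type
  | eps : Fml T
  | pred : ℕ → T → Fml T
  | rel : ℕ → T → Fml T
  | eq : T → T → Fml T
  | or : Fml T → Fml T → Fml T
  | not : Fml T → Fml T
  | all : ℕ → Fml T → Fml T
  deriving DecidableEq

namespace Fml

/-- Map a function over the terms of a formula. -/
def mapT {T S : Type} (f : T → S) : Fml T → Fml S
  | eps => eps
  | pred j t => pred j (f t)
  | rel r t => rel r (f t)
  | eq s t => eq (f s) (f t)
  | or a b => or (mapT f a) (mapT f b)
  | not a => not (mapT f a)
  | all v a => all v (mapT f a)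

/-- Logical depth: number of connectives/quantifiers; atomic formulas have depth 0. -/
def depth {T : Type} : Fml T → ℕ
  | or a b => max (depth a) (depth b) + 1
  | not a => depth a + 1
  | all _ a => depth a + 1
  | _ => 0

/-- Number of occurrences of ε. -/
def epsCount {T : Type} : Fml T → ℕ
  | eps => 1
  | or a b => epsCount a + epsCount b
  | not a => epsCount a
  | all _ a => epsCount a
  | _ => 0

/-- Number of occurrences of fresh predicate symbols. -/
def predCount {T : Type} : Fml T → ℕ
  | pred _ _ => 1
  | or a b => predCount a + predCount b
  | not a => predCount a
  | all _ a => predCount a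
  | _ => 0

/-- A formula of the base language L: no ε and no fresh predicates. -/
def IsL {T : Type} (φ : Fml T) : Prop := φ.epsCount = 0 ∧ φ.predCount = 0

def isAtomic {T : Type} : Fml T → Prop
  | or _ _ => False
  | not _ => False
  | all _ _ => False
  | _ => True

/-- Replace every occurrence of ε by `χ`. -/
def substEps {T : Type} (χ : Fml T) : Fml T → Fml T
  | eps => χ
  | pred j t => pred j t
  | rel r t => rel r t
  | eq s t => eq s t
  | or a b => or (substEps χ a) (substEps χ b)
  | not a => not (substEps χ a)
  | all v a => all v (substEps χ a)

/-- Depth of the (unique) occurrence of ε. -/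
def epsDepth {T : Type} : Fml T → ℕ
  | or a b => (if epsCount a ≠ 0 then epsDepth a else epsDepth b) + 1
  | not a => epsDepth a + 1
  | all _ a => epsDepth a + 1
  | _ => 0

/-- Depths of the occurrences of fresh predicate symbols. -/
def predDepths {T : Type} : Fml T → List ℕ
  | pred _ _ => [0]
  | or a b => (predDepths a ++ predDepths b).map (· + 1)
  | not a => (predDepths a).map (· + 1)
  | all _ a => (predDepths a).map (· + 1)
  | _ => []

end Fml

/-- Formulas over concrete first-order terms with variables `ℕ`;
the distinguished variable `w` is `0`. -/
abbrev LFml := Fml (Tm ℕ)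

namespace Fml

/-- The bar normal form (relative to the bound variables `b`): replace every
free variable by `w` and then each maximal term whose only variable is `w` by `w`. -/
def barAux : List ℕ → LFml → LFml
  | b, pred j t => pred j (Tm.collapse b t)
  | b, rel r t => rel r (Tm.collapse b t)
  | b, eq s t => eq (Tm.collapse b s) (Tm.collapse b t)
  | b, or a c => or (barAux b a) (barAux b c)
  | b, not a => not (barAux b a)
  | b, all v a => all v (barAux (v :: b) a)
  | _, eps => eps

/-- The bar normal form of a formula. -/
def bar (φ : LFml) : LFml := barAux [] φ

/-- Equivalence of formulas: equal bar normal forms. -/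
def sim (φ ψ : LFml) : Prop := bar φ = bar ψ

/-- Binding-aware substitution of the term `u` for the variable `x` in a formula. -/
def substV (x : ℕ) (u : Tm ℕ) : LFml → LFml
  | eps => eps
  | pred j t => pred j (t.substV x u)
  | rel r t => rel r (t.substV x u)
  | eq s t => eq (s.substV x u) (t.substV x u)
  | or a b => or (substV x u a) (substV x u b)
  | not a => not (substV x u a)
  | all v a => if v = x then all v a else all v (substV x u a)

end Fml

/-- The set of parts Π(𝛗) of a sequence of formulas: pairs (ψ, χ) with ε
occurring exactly once in ψ, χ an L-formula, and ψ[χ/ε] a member of 𝛗. -/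
def Parts (φs : List LFml) : Set (LFml × LFml) :=
  {p | Fml.epsCount p.1 = 1 ∧ Fml.IsL p.2 ∧ Fml.substEps p.2 p.1 ∈ φs}

/-- The sub-part ordering: (φ,χ) ≺ (φ′,χ′) iff there is ψ (with exactly one ε,
and not ε itself) such that φ′[ψ/ε] = φ and ψ[χ/ε] = χ′. -/
def prec (p q : LFml × LFml) : Prop :=
  ∃ ψ : LFml, ψ ≠ Fml.eps ∧ Fml.epsCount ψ = 1 ∧
    Fml.substEps ψ q.1 = p.1 ∧ Fml.substEps p.2 ψ = q.2

/-- The depth of a part: the number of connectives/quantifiers between the root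
of φ and the occurrence of ε. -/
def pDepth (p : LFml × LFml) : ℕ := Fml.epsDepth p.1

/-- Π⁰(𝛗,n): parts of depth at most n. -/
def Pi0 (φs : List LFml) (n : ℕ) : Set (LFml × LFml) :=
  {p ∈ Parts φs | pDepth p ≤ n}

/-- The hierarchy Π^m(𝛗,n). -/
def PiH (φs : List LFml) (n : ℕ) : ℕ → Set (LFml × LFml)
  | 0 => Pi0 φs n
  | m + 1 => PiH φs n m ∪
      {p ∈ Parts φs | ∃ q ∈ PiH φs n m, ∃ q0 ∈ Pi0 φs n,
        Fml.sim q0.2 q.2 ∧ prec p q ∧ pDepth p - pDepth q ≤ n - pDepth q0}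

/-- The fixed point of the hierarchy Π^m(𝛗,n). -/
def PiLim (φs : List LFml) (n : ℕ) : Set (LFml × LFml) := ⋃ m, PiH φs n m

/-- Γ(𝛗,n). -/
def GammaSet (φs : List LFml) (n : ℕ) : Set LFml :=
  {χ | ∃ φ, (φ, χ) ∈ PiLim φs n}

/-- Γ_I(𝛗,n): formulas from ≺-minimal parts. -/
def GammaMin (φs : List LFml) (n : ℕ) : Set LFml :=
  {χ | ∃ φ, (φ, χ) ∈ PiLim φs n ∧ ∀ q ∈ PiLim φs n, ¬ prec q (φ, χ)}

/-- Apply an assignment (a partial map taking fresh predicates to formulas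
depending on the argument terms) to a formula; undefined predicates go to ε. -/
def applyAsg (g : ℕ → Option (Tm ℕ → LFml)) : LFml → LFml
  | .eps => .eps
  | .pred j t => (g j).elim Fml.eps fun f => f t
  | .rel r t => .rel r t
  | .eq s t => .eq s t
  | .or a b => .or (applyAsg g a) (applyAsg g b)
  | .not a => .not (applyAsg g a)
  | .all v a => .all v (applyAsg g a)

/-- 𝛗′ approximates 𝛗 iff some (finitely supported) assignment g satisfies 𝛗 = 𝛗′[g]. -/
def Approximates (φs' φs : List LFml) : Prop :=
  ∃ g : ℕ → Option (Tm ℕ → LFml), {j | (g j).isSome}.Finite ∧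
    φs = φs'.map (applyAsg g)

/-- The defining clauses of the canonical approximation function F_{𝛗,n}:
identity on atomic minimal parts; fresh predicates applied to instantiating
terms on nonatomic ≺-minimal parts, coherently with ∼-classes; commuting with
the outermost connective/quantifier on non-minimal parts; and recoverability
of the original formulas by a single assignment. -/
structure IsCanonApprox (F : LFml → LFml) (φs : List LFml) (n : ℕ) : Prop where
  atomMin : ∀ χ ∈ GammaMin φs n, χ.isAtomic → F χ = χ
  minFresh : ∀ χ ∈ GammaMin φs n, ¬ χ.isAtomic → ∃ j t, F χ = Fml.pred j t
  minClass : ∀ χ ∈ GammaMin φs n, ∀ χ' ∈ GammaMin φs n, ¬ χ.isAtomic → ¬ χ'.isAtomic →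
      (Fml.sim χ χ' ↔ ∃ j t t', F χ = Fml.pred j t ∧ F χ' = Fml.pred j t')
  commOr : ∀ a b, Fml.or a b ∈ GammaSet φs n → Fml.or a b ∉ GammaMin φs n →
      F (Fml.or a b) = Fml.or (F a) (F b)
  commNot : ∀ a, Fml.not a ∈ GammaSet φs n → Fml.not a ∉ GammaMin φs n →
      F (Fml.not a) = Fml.not (F a)
  commAll : ∀ v a, Fml.all v a ∈ GammaSet φs n → Fml.all v a ∉ GammaMin φs n →
      F (Fml.all v a) = Fml.all v (F a)
  recover : ∃ g : ℕ → Option (Tm ℕ → LFml), {j | (g j).isSome}.Finite ∧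
      ∀ χ ∈ GammaSet φs n, applyAsg g (F χ) = χ

/-- The n-th approximation of the sequence 𝛗, given a family F of canonical
approximation functions. -/
def approxSeq (F : List LFml → ℕ → LFml → LFml) (φs : List LFml) (n : ℕ) : List LFml :=
  φs.map (F φs n)


/-! ### Auxiliary lemmas for the proof -/

namespace PiAux

open Fml

lemma substEps_of_epsCount_zero {T : Type} {a : Fml T} (h : Fml.epsCount a = 0) (χ : Fml T) :
    Fml.substEps χ a = a := by
  induction a with
  | eps => simp [Fml.epsCount] at h
  | pred j t => rfl
  | rel r t => rfl
  | eq s t => rfl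
  | or x y ihx ihy =>
    simp [Fml.epsCount] at h
    simp [Fml.substEps, ihx h.1, ihy h.2]
  | not x ihx =>
    simp [Fml.epsCount] at h
    simp [Fml.substEps, ihx h]
  | all v x ihx =>
    simp [Fml.epsCount] at h
    simp [Fml.substEps, ihx h]

lemma epsCount_substEps {T : Type} (χ c : Fml T) :
    Fml.epsCount (Fml.substEps χ c) = Fml.epsCount c * Fml.epsCount χ := by
  induction c with
  | eps => simp [Fml.substEps, Fml.epsCount]
  | pred j t => simp [Fml.substEps, Fml.epsCount]
  | rel r t => simp [Fml.substEps, Fml.epsCount]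
  | eq s t => simp [Fml.substEps, Fml.epsCount]
  | or x y ihx ihy => simp [Fml.substEps, Fml.epsCount, ihx, ihy, Nat.add_mul]
  | not x ihx => simp [Fml.substEps, Fml.epsCount, ihx]
  | all v x ihx => simp [Fml.substEps, Fml.epsCount, ihx]

lemma substEps_substEps {T : Type} (a b c : Fml T) :
    Fml.substEps a (Fml.substEps b c) = Fml.substEps (Fml.substEps a b) c := by
  induction c with
  | eps => rfl
  | pred j t => rfl
  | rel r t => rfl
  | eq s t => rfl
  | or x y ihx ihy => simp [Fml.substEps, ihx, ihy]
  | not x ihx => simp [Fml.substEps, ihx]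
  | all v x ihx => simp [Fml.substEps, ihx]

lemma epsDepth_substEps {T : Type} {c ψ : Fml T} (hc : Fml.epsCount c = 1)
    (hψ : Fml.epsCount ψ = 1) :
    Fml.epsDepth (Fml.substEps ψ c) = Fml.epsDepth c + Fml.epsDepth ψ := by
  induction c with
  | eps => simp [Fml.substEps, Fml.epsDepth]
  | pred j t => simp [Fml.epsCount] at hc
  | rel r t => simp [Fml.epsCount] at hc
  | eq s t => simp [Fml.epsCount] at hc
  | or x y ihx ihy =>
    simp only [Fml.epsCount] at hc
    simp only [Fml.substEps, Fml.epsDepth, epsCount_substEps, hψ, Nat.mul_one]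
    rcases Nat.eq_zero_or_pos (Fml.epsCount x) with hx | hx
    · have hy : Fml.epsCount y = 1 := by omega
      simp [hx, ihy hy]; omega
    · have hx1 : Fml.epsCount x = 1 := by omega
      simp [ihx hx1, hx1]; omega
  | not x ihx =>
    simp only [Fml.epsCount] at hc
    simp [Fml.substEps, Fml.epsDepth, ihx hc, Nat.add_right_comm]
  | all v x ihx =>
    simp only [Fml.epsCount] at hc
    simp [Fml.substEps, Fml.epsDepth, ihx hc, Nat.add_right_comm]

lemma le_depth_substEps {T : Type} {c : Fml T} (hc : Fml.epsCount c = 1) (χ : Fml T) :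
    Fml.epsDepth c + Fml.depth χ ≤ Fml.depth (Fml.substEps χ c) := by
  induction c with
  | eps => simp [Fml.substEps, Fml.epsDepth]
  | pred j t => simp [Fml.epsCount] at hc
  | rel r t => simp [Fml.epsCount] at hc
  | eq s t => simp [Fml.epsCount] at hc
  | or x y ihx ihy =>
    simp only [Fml.epsCount] at hc
    simp only [Fml.substEps, Fml.epsDepth, Fml.depth]
    rcases Nat.eq_zero_or_pos (Fml.epsCount x) with hx | hx
    · have hy : Fml.epsCount y = 1 := by omega
      have := ihy hy
      simp only [hx, ne_eq, not_true_eq_false, if_false]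
      have h2 : Fml.depth (Fml.substEps χ y) ≤ max (Fml.depth (Fml.substEps χ x)) (Fml.depth (Fml.substEps χ y)) := le_max_right _ _
      omega
    · have hx1 : Fml.epsCount x = 1 := by omega
      have := ihx hx1
      have hne : Fml.epsCount x ≠ 0 := by omega
      simp only [hne, ne_eq, not_false_eq_true, if_true]
      have h2 : Fml.depth (Fml.substEps χ x) ≤ max (Fml.depth (Fml.substEps χ x)) (Fml.depth (Fml.substEps χ y)) := le_max_left _ _
      omega
  | not x ihx =>
    simp only [Fml.epsCount] at hc
    have := ihx hc
    simp only [Fml.substEps, Fml.epsDepth, Fml.depth]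
    omega
  | all v x ihx =>
    simp only [Fml.epsCount] at hc
    have := ihx hc
    simp only [Fml.substEps, Fml.epsDepth, Fml.depth]
    omega

lemma depth_le_depth_substEps {T : Type} {c : Fml T} (hc : Fml.epsCount c = 1) (χ : Fml T) :
    Fml.depth χ ≤ Fml.depth (Fml.substEps χ c) :=
  le_trans (Nat.le_add_left _ _) (le_depth_substEps hc χ)

lemma one_le_epsDepth {T : Type} {ψ : Fml T} (h1 : Fml.epsCount ψ = 1) (h2 : ψ ≠ Fml.eps) :
    1 ≤ Fml.epsDepth ψ := by
  cases ψ with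
  | eps => exact absurd rfl h2
  | pred j t => simp [Fml.epsCount] at h1
  | rel r t => simp [Fml.epsCount] at h1
  | eq s t => simp [Fml.epsCount] at h1
  | or x y => simp [Fml.epsDepth]
  | not x => simp [Fml.epsDepth]
  | all v x => simp [Fml.epsDepth]

lemma substEps_left_injective {T : Type} {c : Fml T} (hc : Fml.epsCount c = 1) :
    ∀ {a b : Fml T}, Fml.substEps a c = Fml.substEps b c → a = b := by
  induction c with
  | eps => intro a b h; exact h
  | pred j t => simp [Fml.epsCount] at hc
  | rel r t => simp [Fml.epsCount] at hc
  | eq s t => simp [Fml.epsCount] at hc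
  | or x y ihx ihy =>
    intro a b h
    simp only [Fml.epsCount] at hc
    simp only [Fml.substEps, Fml.or.injEq] at h
    rcases Nat.eq_zero_or_pos (Fml.epsCount x) with hx | hx
    · exact ihy (by omega) h.2
    · exact ihx (by omega) h.1
  | not x ihx =>
    intro a b h
    simp only [Fml.epsCount] at hc
    simp only [Fml.substEps, Fml.not.injEq] at h
    exact ihx hc h
  | all v x ihx =>
    intro a b h
    simp only [Fml.epsCount] at hc
    simp only [Fml.substEps, Fml.all.injEq] at h
    exact ihx hc h.2

lemma depth_barAux : ∀ (b : List ℕ) (φ : LFml), Fml.depth (Fml.barAux b φ) = Fml.depth φ := by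
  intro b φ
  induction φ generalizing b with
  | eps => rfl
  | pred j t => rfl
  | rel r t => rfl
  | eq s t => rfl
  | or x y ihx ihy => simp [Fml.barAux, Fml.depth, ihx, ihy]
  | not x ihx => simp [Fml.barAux, Fml.depth, ihx]
  | all v x ihx => simp [Fml.barAux, Fml.depth, ihx]

/-- Ancestor positions of the ε in a context `c` filled with `χ`:
for each proper prefix of the path to ε, the pair
(prefix context, subformula there after plugging χ). -/
def anc : LFml → LFml → Finset (LFml × LFml)
  | Fml.or a b, χ =>
      insert (Fml.eps, Fml.substEps χ (Fml.or a b))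
        (if Fml.epsCount a ≠ 0 then (anc a χ).image fun x => (Fml.or x.1 b, x.2)
         else (anc b χ).image fun x => (Fml.or a x.1, x.2))
  | Fml.not a, χ =>
      insert (Fml.eps, Fml.substEps χ (Fml.not a)) ((anc a χ).image fun x => (Fml.not x.1, x.2))
  | Fml.all v a, χ =>
      insert (Fml.eps, Fml.substEps χ (Fml.all v a)) ((anc a χ).image fun x => (Fml.all v x.1, x.2))
  | _, _ => ∅

lemma card_anc : ∀ (c χ : LFml), (anc c χ).card = Fml.epsDepth c := by
  intro c χ
  induction c with
  | eps => rfl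
  | pred j t => rfl
  | rel r t => rfl
  | eq s t => rfl
  | or a b iha ihb =>
    rcases Nat.eq_zero_or_pos (Fml.epsCount a) with ha | ha
    · rw [anc, if_neg (by omega)]
      rw [Finset.card_insert_of_notMem (by
        intro hmem
        simp only [Finset.mem_image] at hmem
        obtain ⟨x, -, hx⟩ := hmem
        exact absurd (congrArg Prod.fst hx) (by simp)),
        Finset.card_image_of_injective _ (fun x y hxy => by
          simpa [Prod.ext_iff, Fml.or.injEq] using hxy)]
      simp [Fml.epsDepth, ha, ihb]
    · rw [anc, if_pos (by omega)]
      rw [Finset.card_insert_of_notMem (by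
        intro hmem
        simp only [Finset.mem_image] at hmem
        obtain ⟨x, -, hx⟩ := hmem
        exact absurd (congrArg Prod.fst hx) (by simp)),
        Finset.card_image_of_injective _ (fun x y hxy => by
          simpa [Prod.ext_iff, Fml.or.injEq] using hxy)]
      have : Fml.epsCount a ≠ 0 := by omega
      simp [Fml.epsDepth, this, iha]
  | not a iha =>
    rw [anc, Finset.card_insert_of_notMem (by
        intro hmem
        simp only [Finset.mem_image] at hmem
        obtain ⟨x, -, hx⟩ := hmem
        exact absurd (congrArg Prod.fst hx) (by simp)),
      Finset.card_image_of_injective _ (fun x y hxy => by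
        simpa [Prod.ext_iff, Fml.not.injEq] using hxy)]
    simp [Fml.epsDepth, iha]
  | all v a iha =>
    rw [anc, Finset.card_insert_of_notMem (by
        intro hmem
        simp only [Finset.mem_image] at hmem
        obtain ⟨x, -, hx⟩ := hmem
        exact absurd (congrArg Prod.fst hx) (by simp)),
      Finset.card_image_of_injective _ (fun x y hxy => by
        simpa [Prod.ext_iff, Fml.all.injEq] using hxy)]
    simp [Fml.epsDepth, iha]

lemma anc_spec : ∀ (c : LFml), Fml.epsCount c = 1 → ∀ (χ : LFml), ∀ x ∈ anc c χ,
    Fml.epsCount x.1 = 1 ∧ Fml.substEps x.2 x.1 = Fml.substEps χ c ∧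
    Fml.epsDepth x.1 < Fml.epsDepth c ∧ Fml.depth χ < Fml.depth x.2 ∧
    Fml.depth x.2 ≤ Fml.depth (Fml.substEps χ c) := by
  intro c
  induction c with
  | eps => intro hc χ x hx; simp [anc] at hx
  | pred j t => intro hc χ x hx; simp [anc] at hx
  | rel r t => intro hc χ x hx; simp [anc] at hx
  | eq s t => intro hc χ x hx; simp [anc] at hx
  | or a b iha ihb =>
    intro hc χ x hx
    simp only [Fml.epsCount] at hc
    have hcc : Fml.epsCount (Fml.or a b) = 1 := by simp [Fml.epsCount]; omega
    have hroot : Fml.depth χ < Fml.depth (Fml.substEps χ (Fml.or a b)) := by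
      have h2 := le_depth_substEps hcc χ
      have h1 : 1 ≤ Fml.epsDepth (Fml.or a b) := by simp [Fml.epsDepth]
      omega
    rcases Nat.eq_zero_or_pos (Fml.epsCount a) with ha | ha
    · have hb : Fml.epsCount b = 1 := by omega
      rw [anc, if_neg (by omega)] at hx
      rcases Finset.mem_insert.mp hx with h | h
      · subst h
        exact ⟨rfl, rfl, by simp [Fml.epsDepth], hroot, le_refl _⟩
      · simp only [Finset.mem_image] at h
        obtain ⟨y, hy, rfl⟩ := h
        obtain ⟨h1, h2, h3, h4, h5⟩ := ihb hb χ y hy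
        refine ⟨by simp [Fml.epsCount, ha, h1], ?_, ?_, h4, ?_⟩
        · simp [Fml.substEps, h2, substEps_of_epsCount_zero ha]
        · have h1' : Fml.epsCount y.1 ≠ 0 := by omega
          simp only [Fml.epsDepth, ha]
          simp [h1']
          omega
        · simp only [Fml.substEps, Fml.depth]
          have : Fml.depth (Fml.substEps χ b) ≤ max (Fml.depth (Fml.substEps χ a)) (Fml.depth (Fml.substEps χ b)) := le_max_right _ _
          omega
    · have ha1 : Fml.epsCount a = 1 := by omega
      have hb : Fml.epsCount b = 0 := by omega
      rw [anc, if_pos (by omega)] at hx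
      rcases Finset.mem_insert.mp hx with h | h
      · subst h
        exact ⟨rfl, rfl, by simp [Fml.epsDepth], hroot, le_refl _⟩
      · simp only [Finset.mem_image] at h
        obtain ⟨y, hy, rfl⟩ := h
        obtain ⟨h1, h2, h3, h4, h5⟩ := iha ha1 χ y hy
        refine ⟨by simp [Fml.epsCount, hb, h1], ?_, ?_, h4, ?_⟩
        · simp [Fml.substEps, h2, substEps_of_epsCount_zero hb]
        · have h1' : Fml.epsCount y.1 ≠ 0 := by omega
          have ha' : Fml.epsCount a ≠ 0 := by omega
          simp only [Fml.epsDepth]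
          simp [h1', ha']
          omega
        · simp only [Fml.substEps, Fml.depth]
          have : Fml.depth (Fml.substEps χ a) ≤ max (Fml.depth (Fml.substEps χ a)) (Fml.depth (Fml.substEps χ b)) := le_max_left _ _
          omega
  | not a iha =>
    intro hc χ x hx
    simp only [Fml.epsCount] at hc
    rw [anc] at hx
    rcases Finset.mem_insert.mp hx with h | h
    · subst h
      refine ⟨rfl, rfl, by simp [Fml.epsDepth], ?_, le_refl _⟩
      have h2 := le_depth_substEps (c := Fml.not a) (by simpa [Fml.epsCount]) χ
      have h1 : 1 ≤ Fml.epsDepth (Fml.not a) := by simp [Fml.epsDepth]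
      show Fml.depth χ < Fml.depth (Fml.substEps χ (Fml.not a))
      omega
    · simp only [Finset.mem_image] at h
      obtain ⟨y, hy, rfl⟩ := h
      obtain ⟨h1, h2, h3, h4, h5⟩ := iha hc χ y hy
      refine ⟨by simpa [Fml.epsCount], ?_, ?_, h4, ?_⟩
      · simp [Fml.substEps, h2]
      · simp only [Fml.epsDepth]; omega
      · simp only [Fml.substEps, Fml.depth]; omega
  | all v a iha =>
    intro hc χ x hx
    simp only [Fml.epsCount] at hc
    rw [anc] at hx
    rcases Finset.mem_insert.mp hx with h | h
    · subst h
      refine ⟨rfl, rfl, by simp [Fml.epsDepth], ?_, le_refl _⟩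
      have h2 := le_depth_substEps (c := Fml.all v a) (by simpa [Fml.epsCount]) χ
      have h1 : 1 ≤ Fml.epsDepth (Fml.all v a) := by simp [Fml.epsDepth]
      show Fml.depth χ < Fml.depth (Fml.substEps χ (Fml.all v a))
      omega
    · simp only [Finset.mem_image] at h
      obtain ⟨y, hy, rfl⟩ := h
      obtain ⟨h1, h2, h3, h4, h5⟩ := iha hc χ y hy
      refine ⟨by simpa [Fml.epsCount], ?_, ?_, h4, ?_⟩
      · simp [Fml.substEps, h2]
      · simp only [Fml.epsDepth]; omega
      · simp only [Fml.substEps, Fml.depth]; omega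

/-- If α and β have the same bar normal form (relative to b) and β decomposes as
a context c filled with χ, then α decomposes correspondingly, with matching
ε-depth and matching depth of the filling. -/
lemma transfer : ∀ (c : LFml) (b : List ℕ) (α β χ : LFml),
    Fml.barAux b α = Fml.barAux b β → β = Fml.substEps χ c → Fml.epsCount c = 1 →
    Fml.epsCount α = 0 →
    ∃ c' χ', α = Fml.substEps χ' c' ∧ Fml.epsCount c' = 1 ∧
      Fml.epsDepth c' = Fml.epsDepth c ∧ Fml.depth χ' = Fml.depth χ := by
  intro c
  induction c with
  | eps =>
    intro b α β χ hbar hβ hc hα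
    refine ⟨Fml.eps, α, rfl, rfl, rfl, ?_⟩
    have h3 : Fml.depth α = Fml.depth β := by
      rw [← depth_barAux b α, ← depth_barAux b β, hbar]
    have hβχ : β = χ := hβ
    exact hβχ ▸ h3
  | pred j t => intro b α β χ hbar hβ hc hα; simp [Fml.epsCount] at hc
  | rel r t => intro b α β χ hbar hβ hc hα; simp [Fml.epsCount] at hc
  | eq s t => intro b α β χ hbar hβ hc hα; simp [Fml.epsCount] at hc
  | or c1 c2 ih1 ih2 =>
    intro b α β χ hbar hβ hc hα
    simp only [Fml.epsCount] at hc
    subst hβ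
    cases α with
    | or a1 a2 =>
      simp only [Fml.substEps, Fml.barAux, Fml.or.injEq] at hbar
      simp only [Fml.epsCount, Nat.add_eq_zero] at hα
      rcases Nat.eq_zero_or_pos (Fml.epsCount c1) with h1 | h1
      · have hc2 : Fml.epsCount c2 = 1 := by omega
        obtain ⟨c2', χ', ha2, hcnt, hdep, hdepχ⟩ := ih2 b a2 (Fml.substEps χ c2) χ hbar.2 rfl hc2 hα.2
        refine ⟨Fml.or a1 c2', χ', ?_, ?_, ?_, hdepχ⟩
        · simp [Fml.substEps, ← ha2, substEps_of_epsCount_zero hα.1]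
        · simp [Fml.epsCount, hα.1, hcnt]
        · have e1 : Fml.epsCount a1 = 0 := hα.1
          simp [Fml.epsDepth, h1, e1, hdep]
      · have hc1 : Fml.epsCount c1 = 1 := by omega
        have hc2 : Fml.epsCount c2 = 0 := by omega
        obtain ⟨c1', χ', ha1, hcnt, hdep, hdepχ⟩ := ih1 b a1 (Fml.substEps χ c1) χ hbar.1 rfl hc1 hα.1
        refine ⟨Fml.or c1' a2, χ', ?_, ?_, ?_, hdepχ⟩
        · simp [Fml.substEps, ← ha1, substEps_of_epsCount_zero hα.2]
        · simp [Fml.epsCount, hα.2, hcnt]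
        · have e1 : Fml.epsCount c1' ≠ 0 := by omega
          have e2 : Fml.epsCount c1 ≠ 0 := by omega
          simp [Fml.epsDepth, e1, e2, hdep]
    | eps => simp [Fml.epsCount] at hα
    | pred j t => simp [Fml.substEps, Fml.barAux] at hbar
    | rel r t => simp [Fml.substEps, Fml.barAux] at hbar
    | eq s t => simp [Fml.substEps, Fml.barAux] at hbar
    | not a => simp [Fml.substEps, Fml.barAux] at hbar
    | all v a => simp [Fml.substEps, Fml.barAux] at hbar
  | not c1 ih1 =>
    intro b α β χ hbar hβ hc hα
    simp only [Fml.epsCount] at hc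
    subst hβ
    cases α with
    | not a1 =>
      simp only [Fml.substEps, Fml.barAux, Fml.not.injEq] at hbar
      simp only [Fml.epsCount] at hα
      obtain ⟨c1', χ', ha1, hcnt, hdep, hdepχ⟩ := ih1 b a1 (Fml.substEps χ c1) χ hbar rfl hc hα
      exact ⟨Fml.not c1', χ', by simp [Fml.substEps, ← ha1], by simp [Fml.epsCount, hcnt],
        by simp [Fml.epsDepth, hdep], hdepχ⟩
    | eps => simp [Fml.epsCount] at hα
    | pred j t => simp [Fml.substEps, Fml.barAux] at hbar
    | rel r t => simp [Fml.substEps, Fml.barAux] at hbar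
    | eq s t => simp [Fml.substEps, Fml.barAux] at hbar
    | or a1 a2 => simp [Fml.substEps, Fml.barAux] at hbar
    | all v a => simp [Fml.substEps, Fml.barAux] at hbar
  | all v c1 ih1 =>
    intro b α β χ hbar hβ hc hα
    simp only [Fml.epsCount] at hc
    subst hβ
    cases α with
    | all w a1 =>
      simp only [Fml.substEps, Fml.barAux, Fml.all.injEq] at hbar
      simp only [Fml.epsCount] at hα
      obtain ⟨rfl, hbar2⟩ := hbar
      obtain ⟨c1', χ', ha1, hcnt, hdep, hdepχ⟩ := ih1 (w :: b) a1 (Fml.substEps χ c1) χ hbar2 rfl hc hα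
      exact ⟨Fml.all w c1', χ', by simp [Fml.substEps, ← ha1], by simp [Fml.epsCount, hcnt],
        by simp [Fml.epsDepth, hdep], hdepχ⟩
    | eps => simp [Fml.epsCount] at hα
    | pred j t => simp [Fml.substEps, Fml.barAux] at hbar
    | rel r t => simp [Fml.substEps, Fml.barAux] at hbar
    | eq s t => simp [Fml.substEps, Fml.barAux] at hbar
    | or a1 a2 => simp [Fml.substEps, Fml.barAux] at hbar
    | not a => simp [Fml.substEps, Fml.barAux] at hbar

/-- All decompositions of θ into (context, filling) with hole depth < n. -/
def decomps : ℕ → LFml → Finset (LFml × LFml)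
  | 0, _ => ∅
  | n+1, θ =>
    insert (Fml.eps, θ)
      (match θ with
       | Fml.or a b =>
           ((decomps n a).image fun x => (Fml.or x.1 b, x.2)) ∪
           ((decomps n b).image fun x => (Fml.or a x.1, x.2))
       | Fml.not a => (decomps n a).image fun x => (Fml.not x.1, x.2)
       | Fml.all v a => (decomps n a).image fun x => (Fml.all v x.1, x.2)
       | _ => ∅)

lemma mem_decomps : ∀ (c : LFml), Fml.epsCount c = 1 → ∀ (χ : LFml) (n : ℕ),
    Fml.epsDepth c < n → (c, χ) ∈ decomps n (Fml.substEps χ c) := by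
  intro c
  induction c with
  | eps =>
    intro _ χ n hn
    match n, hn with
    | n+1, _ => exact Finset.mem_insert_self _ _
  | pred j t => intro hc; simp [Fml.epsCount] at hc
  | rel r t => intro hc; simp [Fml.epsCount] at hc
  | eq s t => intro hc; simp [Fml.epsCount] at hc
  | or a b iha ihb =>
    intro hc χ n hn
    simp only [Fml.epsCount] at hc
    match n, hn with
    | n+1, hn =>
      apply Finset.mem_insert_of_mem
      rcases Nat.eq_zero_or_pos (Fml.epsCount a) with ha | ha
      · have hb : Fml.epsCount b = 1 := by omega
        have hda : Fml.epsDepth b < n := by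
          rw [show Fml.epsDepth (Fml.or a b) = Fml.epsDepth b + 1 from by
            simp [Fml.epsDepth, ha]] at hn
          omega
        have : Fml.substEps χ (Fml.or a b) = Fml.or a (Fml.substEps χ b) := by
          simp [Fml.substEps, substEps_of_epsCount_zero ha]
        rw [this]
        apply Finset.mem_union_right
        exact Finset.mem_image.mpr ⟨(b, χ), ihb hb χ n hda, rfl⟩
      · have ha1 : Fml.epsCount a = 1 := by omega
        have hb0 : Fml.epsCount b = 0 := by omega
        have hda : Fml.epsDepth a < n := by
          have hne : Fml.epsCount a ≠ 0 := by omega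
          rw [show Fml.epsDepth (Fml.or a b) = Fml.epsDepth a + 1 from by
            simp [Fml.epsDepth, hne]] at hn
          omega
        have : Fml.substEps χ (Fml.or a b) = Fml.or (Fml.substEps χ a) b := by
          simp [Fml.substEps, substEps_of_epsCount_zero hb0]
        rw [this]
        apply Finset.mem_union_left
        exact Finset.mem_image.mpr ⟨(a, χ), iha ha1 χ n hda, rfl⟩
  | not a iha =>
    intro hc χ n hn
    simp only [Fml.epsCount] at hc
    match n, hn with
    | n+1, hn =>
      apply Finset.mem_insert_of_mem
      have hda : Fml.epsDepth a < n := by simp only [Fml.epsDepth] at hn; omega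
      show (Fml.not a, χ) ∈ (decomps n (Fml.substEps χ a)).image fun x => (Fml.not x.1, x.2)
      exact Finset.mem_image.mpr ⟨(a, χ), iha hc χ n hda, rfl⟩
  | all v a iha =>
    intro hc χ n hn
    simp only [Fml.epsCount] at hc
    match n, hn with
    | n+1, hn =>
      apply Finset.mem_insert_of_mem
      have hda : Fml.epsDepth a < n := by simp only [Fml.epsDepth] at hn; omega
      show (Fml.all v a, χ) ∈ (decomps n (Fml.substEps χ a)).image fun x => (Fml.all v x.1, x.2)
      exact Finset.mem_image.mpr ⟨(a, χ), iha hc χ n hda, rfl⟩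

lemma card_decomps : ∀ (n : ℕ) (θ : LFml), (decomps n θ).card ≤ 2 ^ n - 1 := by
  intro n
  induction n with
  | zero => intro θ; simp [decomps]
  | succ n ih =>
    intro θ
    have hpow : 1 ≤ 2 ^ n := Nat.one_le_two_pow
    have hpow2 : 2 ^ (n+1) = 2 ^ n * 2 := pow_succ 2 n
    cases θ with
    | or a b =>
      have hd : decomps (n+1) (Fml.or a b) = insert (Fml.eps, Fml.or a b)
          (((decomps n a).image fun x => (Fml.or x.1 b, x.2)) ∪
           ((decomps n b).image fun x => (Fml.or a x.1, x.2))) := rfl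
      rw [hd]
      have h0 := Finset.card_insert_le (Fml.eps, Fml.or a b)
        (((decomps n a).image fun x => (Fml.or x.1 b, x.2)) ∪
         ((decomps n b).image fun x => (Fml.or a x.1, x.2)))
      have hu := Finset.card_union_le ((decomps n a).image fun x => (Fml.or x.1 b, x.2))
        ((decomps n b).image fun x => (Fml.or a x.1, x.2))
      have h1 := Finset.card_image_le (s := decomps n a) (f := fun x => (Fml.or x.1 b, x.2))
      have h2 := Finset.card_image_le (s := decomps n b) (f := fun x => (Fml.or a x.1, x.2))
      have ha := ih a; have hb := ih b
      omega
    | not a =>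
      have hd : decomps (n+1) (Fml.not a) = insert (Fml.eps, Fml.not a)
          ((decomps n a).image fun x => (Fml.not x.1, x.2)) := rfl
      rw [hd]
      have h0 := Finset.card_insert_le (Fml.eps, Fml.not a)
        ((decomps n a).image fun x => (Fml.not x.1, x.2))
      have h1 := Finset.card_image_le (s := decomps n a) (f := fun x => (Fml.not x.1, x.2))
      have ha := ih a
      omega
    | all v a =>
      have hd : decomps (n+1) (Fml.all v a) = insert (Fml.eps, Fml.all v a)
          ((decomps n a).image fun x => (Fml.all v x.1, x.2)) := rfl
      rw [hd]
      have h0 := Finset.card_insert_le (Fml.eps, Fml.all v a)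
        ((decomps n a).image fun x => (Fml.all v x.1, x.2))
      have h1 := Finset.card_image_le (s := decomps n a) (f := fun x => (Fml.all v x.1, x.2))
      have ha := ih a
      omega
    | eps =>
      have hd : decomps (n+1) Fml.eps = insert (Fml.eps, Fml.eps) ∅ := rfl
      rw [hd]; simp; omega
    | pred j t =>
      have hd : decomps (n+1) (Fml.pred j t) = insert (Fml.eps, Fml.pred j t) ∅ := rfl
      rw [hd]; simp; omega
    | rel r t =>
      have hd : decomps (n+1) (Fml.rel r t) = insert (Fml.eps, Fml.rel r t) ∅ := rfl
      rw [hd]; simp; omega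
    | eq s t =>
      have hd : decomps (n+1) (Fml.eq s t) = insert (Fml.eps, Fml.eq s t) ∅ := rfl
      rw [hd]; simp; omega

/-- All positions of hole depth < n over the members of φs. -/
def bigPos (φs : List LFml) (n : ℕ) : Finset (LFml × LFml) :=
  φs.foldr (fun θ acc => decomps n θ ∪ acc) ∅

lemma mem_bigPos {φs : List LFml} {n : ℕ} {θ : LFml} {x : LFml × LFml}
    (hθ : θ ∈ φs) (hx : x ∈ decomps n θ) : x ∈ bigPos φs n := by
  induction φs with
  | nil => simp at hθ
  | cons h t ih =>
    rcases List.mem_cons.mp hθ with rfl | hmem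
    · exact Finset.mem_union_left _ hx
    · exact Finset.mem_union_right _ (ih hmem)

lemma card_bigPos (φs : List LFml) (n : ℕ) :
    (bigPos φs n).card ≤ φs.length * (2 ^ n - 1) := by
  induction φs with
  | nil => simp [bigPos]
  | cons h t ih =>
    have := Finset.card_union_le (decomps n h) (bigPos t n)
    have h1 := card_decomps n h
    simp only [bigPos, List.foldr] at *
    simp only [List.length_cons]
    calc (decomps n h ∪ List.foldr (fun θ acc => decomps n θ ∪ acc) ∅ t).card
        ≤ (decomps n h).card + _ := this
      _ ≤ (t.length + 1) * (2 ^ n - 1) := by rw [Nat.add_mul, Nat.one_mul]; omega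

lemma two_mul_le_two_pow : ∀ L : ℕ, 1 ≤ L → 2 * L ≤ 2 ^ L := by
  intro L
  induction L with
  | zero => omega
  | succ k ih =>
    intro _
    rcases Nat.eq_zero_or_pos k with rfl | hk
    · simp
    · have h1 := ih hk
      have h2 : 2 ^ (k+1) = 2 ^ k * 2 := pow_succ 2 k
      omega

lemma arith_main (L n : ℕ) : L * (2 ^ (L * (2 ^ n - 1) + 1) - 1) ≤ 2 ^ (L * 2 ^ n) := by
  rcases Nat.eq_zero_or_pos L with rfl | hL
  · simp
  · have h1 : 1 ≤ 2 ^ n := Nat.one_le_two_pow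
    have hD : L * 2 ^ n = L * (2 ^ n - 1) + L := by
      have h2 : 2 ^ n - 1 + 1 = 2 ^ n := by omega
      calc L * 2 ^ n = L * (2 ^ n - 1 + 1) := by rw [h2]
        _ = L * (2 ^ n - 1) + L := by rw [Nat.mul_add, Nat.mul_one]
    rw [hD]
    have h3 : 2 ^ (L * (2 ^ n - 1) + 1) = 2 ^ (L * (2 ^ n - 1)) * 2 := pow_succ 2 _
    have h4 : 2 * L ≤ 2 ^ L := two_mul_le_two_pow L hL
    calc L * (2 ^ (L * (2 ^ n - 1) + 1) - 1) ≤ L * (2 ^ (L * (2 ^ n - 1)) * 2) :=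
          Nat.mul_le_mul_left _ (by omega)
      _ = 2 ^ (L * (2 ^ n - 1)) * (2 * L) := by ring
      _ ≤ 2 ^ (L * (2 ^ n - 1)) * 2 ^ L := Nat.mul_le_mul_left _ h4
      _ = 2 ^ (L * (2 ^ n - 1) + L) := (pow_add 2 _ _).symm

end PiAux

open PiAux in
lemma PiH_subset_parts (φs : List LFml) (n : ℕ) : ∀ m, PiH φs n m ⊆ Parts φs := by
  intro m
  induction m with
  | zero => intro p hp; exact hp.1
  | succ m ih =>
    intro p hp
    rcases hp with hp | hp
    · exact ih hp
    · exact hp.1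

open PiAux in
lemma PiH_charging (φs : List LFml) (n : ℕ) : ∀ m, ∀ p ∈ PiH φs n m,
    ∃ S : Finset (LFml × LFml),
      (∀ x ∈ S, Fml.epsCount x.1 = 1 ∧ Fml.substEps x.2 x.1 ∈ φs ∧ Fml.epsDepth x.1 < n) ∧
      pDepth p ≤ S.card ∧ ∀ x ∈ S, Fml.depth p.2 < Fml.depth x.2 := by
  intro m
  induction m with
  | zero =>
    intro p hp
    obtain ⟨⟨hcnt, hL, hmem⟩, hdep⟩ := hp
    refine ⟨anc p.1 p.2, ?_, ?_, ?_⟩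
    · intro x hx
      obtain ⟨h1, h2, h3, h4, h5⟩ := anc_spec p.1 hcnt p.2 x hx
      have hdep' : pDepth p ≤ n := hdep
      exact ⟨h1, by rw [h2]; exact hmem, by
        have : pDepth p = Fml.epsDepth p.1 := rfl
        omega⟩
    · rw [card_anc]; exact le_refl _
    · intro x hx; exact (anc_spec p.1 hcnt p.2 x hx).2.2.2.1
  | succ m ih =>
    intro p hp
    rcases hp with hp | hp
    · exact ih p hp
    obtain ⟨hpParts, q, hq, q0, hq0, hsim, hprec, hle⟩ := hp
    obtain ⟨ψ, hψne, hψcnt, hψ1, hψ2⟩ := hprec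
    obtain ⟨S, hSgood, hScard, hSdepth⟩ := ih q hq
    obtain ⟨hqcnt, hqL, hqmem⟩ := PiH_subset_parts φs n m hq
    obtain ⟨⟨hq0cnt, hq0L, hq0mem⟩, hq0dep⟩ := hq0
    have hδ1 : 1 ≤ Fml.epsDepth ψ := one_le_epsDepth hψcnt hψne
    have hdp : pDepth p = pDepth q + Fml.epsDepth ψ := by
      show Fml.epsDepth p.1 = Fml.epsDepth q.1 + Fml.epsDepth ψ
      rw [← hψ1, epsDepth_substEps hqcnt hψcnt]
    have hδn : Fml.epsDepth ψ + pDepth q0 ≤ n := by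
      have h1 : pDepth p - pDepth q ≤ n - pDepth q0 := hle
      have h2 : pDepth q0 ≤ n := hq0dep
      omega
    have hbar : Fml.barAux [] q0.2 = Fml.barAux [] q.2 := hsim
    obtain ⟨ψ', χ', hq02, hψ'cnt, hψ'dep, hχ'dep⟩ :=
      transfer ψ [] q0.2 q.2 p.2 hbar hψ2.symm hψcnt hq0L.1
    have hdq2 : Fml.depth q0.2 = Fml.depth q.2 := by
      rw [← depth_barAux [] q0.2, ← depth_barAux [] q.2, hbar]
    have hpq2 : Fml.depth p.2 ≤ Fml.depth q.2 := by
      rw [← hψ2]; exact depth_le_depth_substEps hψcnt p.2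
    set New : Finset (LFml × LFml) :=
      (anc ψ' χ').image (fun x => (Fml.substEps x.1 q0.1, x.2)) with hNew
    have hNspec : ∀ y ∈ New,
        (Fml.epsCount y.1 = 1 ∧ Fml.substEps y.2 y.1 ∈ φs ∧ Fml.epsDepth y.1 < n) ∧
        Fml.depth p.2 < Fml.depth y.2 ∧ Fml.depth y.2 ≤ Fml.depth q.2 := by
      intro y hy
      obtain ⟨x, hx, rfl⟩ := Finset.mem_image.mp hy
      obtain ⟨a1, a2, a3, a4, a5⟩ := anc_spec ψ' hψ'cnt χ' x hx
      rw [← hq02] at a2 a5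
      refine ⟨⟨?_, ?_, ?_⟩, ?_, ?_⟩
      · rw [epsCount_substEps, hq0cnt, a1]
      · show Fml.substEps x.2 (Fml.substEps x.1 q0.1) ∈ φs
        rw [substEps_substEps, a2]
        exact hq0mem
      · show Fml.epsDepth (Fml.substEps x.1 q0.1) < n
        rw [epsDepth_substEps hq0cnt a1]
        have : pDepth q0 = Fml.epsDepth q0.1 := rfl
        omega
      · show Fml.depth p.2 < Fml.depth x.2
        omega
      · show Fml.depth x.2 ≤ Fml.depth q.2
        omega
    have hdisj : Disjoint S New := by
      rw [Finset.disjoint_right]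
      intro y hyN hyS
      have h1 := (hNspec y hyN).2.2
      have h2 := hSdepth y hyS
      omega
    have hNcard : New.card = Fml.epsDepth ψ := by
      rw [hNew, Finset.card_image_of_injective _ (fun x y hxy => by
        simp only [Prod.mk.injEq] at hxy
        have h3 : x.1 = y.1 := substEps_left_injective hq0cnt hxy.1
        exact Prod.ext h3 hxy.2), card_anc, hψ'dep]
    refine ⟨S ∪ New, ?_, ?_, ?_⟩
    · intro x hx
      rcases Finset.mem_union.mp hx with hx | hx
      · exact hSgood x hx
      · exact (hNspec x hx).1
    · rw [Finset.card_union_of_disjoint hdisj]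
      omega
    · intro x hx
      rcases Finset.mem_union.mp hx with hx | hx
      · have := hSdepth x hx; omega
      · exact (hNspec x hx).2.1

/-- Every element of Π^m(𝛗,n) has depth at most lh(𝛗)·2^n; consequently
|Π^m(𝛗,n)| ≤ 2^{lh(𝛗)·2^n} and the hierarchy reaches a fixed point. -/
theorem PiH_depth_card_fixed (φs : List LFml) (n : ℕ) :
    (∀ m, ∀ p ∈ PiH φs n m, pDepth p ≤ φs.length * 2 ^ n) ∧
    (∀ m, (PiH φs n m).Finite ∧ (PiH φs n m).ncard ≤ 2 ^ (φs.length * 2 ^ n)) ∧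
    (∃ k, PiH φs n k = PiH φs n (k + 1)) := by
  classical
  set L := φs.length with hLdef
  have hdepth : ∀ m, ∀ p ∈ PiH φs n m, pDepth p ≤ L * (2 ^ n - 1) := by
    intro m p hp
    obtain ⟨S, hgood, hcard, -⟩ := PiH_charging φs n m p hp
    have hsub : S ⊆ PiAux.bigPos φs n := by
      intro x hx
      obtain ⟨h1, h2, h3⟩ := hgood x hx
      have h4 := PiAux.mem_decomps x.1 h1 x.2 n h3
      exact PiAux.mem_bigPos h2 h4
    calc pDepth p ≤ S.card := hcard
      _ ≤ (PiAux.bigPos φs n).card := Finset.card_le_card hsub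
      _ ≤ L * (2 ^ n - 1) := PiAux.card_bigPos φs n
  have hdepth2 : ∀ m, ∀ p ∈ PiH φs n m, pDepth p ≤ L * 2 ^ n := fun m p hp =>
    le_trans (hdepth m p hp) (Nat.mul_le_mul_left _ (Nat.sub_le _ _))
  set D := L * (2 ^ n - 1) with hDdef
  have hsub2 : ∀ m, PiH φs n m ⊆ ↑(PiAux.bigPos φs (D + 1)) := by
    intro m p hp
    obtain ⟨hcnt, hL, hmem⟩ := PiH_subset_parts φs n m hp
    have hd := hdepth m p hp
    have hd' : Fml.epsDepth p.1 < D + 1 := by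
      have : pDepth p = Fml.epsDepth p.1 := rfl
      omega
    have h5 := PiAux.mem_decomps p.1 hcnt p.2 (D + 1) hd'
    exact Finset.mem_coe.mpr (PiAux.mem_bigPos hmem h5)
  have hfin : ∀ m, (PiH φs n m).Finite := fun m =>
    Set.Finite.subset (Finset.finite_toSet _) (hsub2 m)
  have hbig : (PiAux.bigPos φs (D + 1)).card ≤ 2 ^ (L * 2 ^ n) :=
    le_trans (PiAux.card_bigPos φs (D + 1)) (PiAux.arith_main L n)
  have hcardb : ∀ m, (PiH φs n m).ncard ≤ 2 ^ (L * 2 ^ n) := by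
    intro m
    calc (PiH φs n m).ncard ≤ (↑(PiAux.bigPos φs (D + 1)) : Set (LFml × LFml)).ncard :=
          Set.ncard_le_ncard (hsub2 m) (Finset.finite_toSet _)
      _ = (PiAux.bigPos φs (D + 1)).card := Set.ncard_coe_finset _
      _ ≤ 2 ^ (L * 2 ^ n) := hbig
  refine ⟨hdepth2, fun m => ⟨hfin m, hcardb m⟩, ?_⟩
  by_contra hfix
  push_neg at hfix
  have hmono : ∀ k, PiH φs n k ⊆ PiH φs n (k + 1) := fun k => Set.subset_union_left
  have hstrict : ∀ k, (PiH φs n k).ncard < (PiH φs n (k + 1)).ncard := fun k =>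
    Set.ncard_lt_ncard (ssubset_of_subset_of_ne (hmono k) (hfix k)) (hfin (k + 1))
  have hgrow : ∀ k, k ≤ (PiH φs n k).ncard := by
    intro k
    induction k with
    | zero => omega
    | succ k ih => have := hstrict k; omega
  have h1 := hgrow (2 ^ (L * 2 ^ n) + 1)
  have h2 := hcardb (2 ^ (L * 2 ^ n) + 1)
  omega
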